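/- arXiv:1509.02447 — 3 statements merged into one kernel-verified Lean document; each statement's English description precedes it below -/
import Mathlib

section
/- Under the stated assumptions, for every k ≥ 1 and every X ∈ E, the GCG iterates satisfy φ(X_k) − φ(X) ≤ 2C/(k+1), where C = max( L·(κ‖X‖_r + R)² , φ(X_1) − φ(X) ). -/
open RealInnerProductSpace

lemma gradient_convex_ineq {E : Type*} [NormedAddCommGroup E] [InnerProductSpace ℝ E]
    [FiniteDimensional ℝ E]
    (f : E → ℝ) (f' : E → E) (hconv : ConvexOn ℝ Set.univ f)
    (hgrad : ∀ A : E, HasGradientAt f (f' A) A) (A B : E) :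
    ⟪B - A, f' A⟫ ≤ f B - f A := by
  set V := B - A with hV
  have hline : HasDerivAt (fun t : ℝ => A + t • V) V 0 := by
    simpa using ((hasDerivAt_id (0 : ℝ)).smul_const V).const_add A
  have hA0 : A + (0 : ℝ) • V = A := by simp
  have hfd : HasFDerivAt f (InnerProductSpace.toDual ℝ E (f' A)) ((fun t : ℝ => A + t • V) 0) := by
    simpa [hA0] using (hgrad A).hasFDerivAt
  have hcomp : HasDerivAt (fun t : ℝ => f (A + t • V)) ⟪f' A, V⟫ 0 := by
    simpa [Function.comp_def, InnerProductSpace.toDual_apply_apply] using hfd.comp_hasDerivAt 0 hline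
  have htend : Filter.Tendsto (slope (fun t : ℝ => f (A + t • V)) 0) (nhdsWithin 0 {(0:ℝ)}ᶜ)
      (nhds ⟪f' A, V⟫) := hasDerivAt_iff_tendsto_slope.mp hcomp
  have hsub : Set.Ioi (0:ℝ) ⊆ {(0:ℝ)}ᶜ := fun t ht => ne_of_gt ht
  have htend' := htend.mono_left (nhdsWithin_mono _ hsub)
  have hle : ⟪f' A, V⟫ ≤ f B - f A := by
    refine le_of_tendsto htend' ?_
    filter_upwards [Ioc_mem_nhdsGT_of_mem (Set.left_mem_Ico.mpr one_pos)] with t ht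
    have hconvt := hconv.2 (Set.mem_univ A) (Set.mem_univ B)
      (by linarith [ht.2] : (0:ℝ) ≤ 1 - t) (le_of_lt ht.1) (by ring)
    have heq : (1 - t) • A + t • B = A + t • V := by
      rw [hV]; module
    rw [heq] at hconvt
    have : slope (fun t : ℝ => f (A + t • V)) 0 t = (f (A + t • V) - f A) / t := by
      rw [slope_def_field]; simp [hA0]
    rw [this, div_le_iff₀ ht.1]
    simp only [smul_eq_mul] at hconvt
    nlinarith [hconvt]
  rw [real_inner_comm]; exact hle


/-- **GCG convergence rate** (Theorem 1): under the smoothness assumption on `f`,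
optimality of the linearized subproblem solutions `Z k`, the line-search upper-bound
property of the iterates, and uniform boundedness of the iterates, the generalized
conditional gradient iterates satisfy `φ (X k) - φ Xc ≤ 2 C / (k + 1)` with
`C = max (L * (κ * nr Xc + R)^2) (φ (X 1) - φ Xc)`. -/
theorem gcg_convergence_rate
    {E : Type*} [NormedAddCommGroup E] [InnerProductSpace ℝ E] [FiniteDimensional ℝ E]
    (f : E → ℝ) (f' : E → E)
    (hconv : ConvexOn ℝ Set.univ f)
    (hgrad : ∀ A : E, HasGradientAt f (f' A) A)
    -- `nr` is a norm on `E` (playing the role of the nuclear norm)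
    (nr : E → ℝ)
    (hnr_nonneg : ∀ x, 0 ≤ nr x)
    (hnr_def : ∀ x, nr x = 0 → x = 0)
    (hnr_add : ∀ x y, nr (x + y) ≤ nr x + nr y)
    (hnr_smul : ∀ (c : ℝ) (x : E), nr (c • x) = |c| * nr x)
    -- `ns` is a norm on `E` (with respect to which `f` is smooth)
    (ns : E → ℝ)
    (hns_nonneg : ∀ x, 0 ≤ ns x)
    (hns_def : ∀ x, ns x = 0 → x = 0)
    (hns_add : ∀ x y, ns (x + y) ≤ ns x + ns y)
    (hns_smul : ∀ (c : ℝ) (x : E), ns (c • x) = |c| * ns x)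
    (μ L κ R : ℝ) (hμ : 0 < μ) (hL : 0 < L) (hκ : 0 < κ)
    -- the objective funtion φ
    (φ : E → ℝ) (hφ : ∀ Y, φ Y = f Y + μ * nr Y)
    -- the smoothness assumption (Assumption 1)
    (hsmooth : ∀ A B : E, ∀ η : ℝ, 0 < η → η < 1 →
      f ((1 - η) • A + η • B) ≤ f A + η * ⟪B - A, f' A⟫ + L * η ^ 2 / 2 * ns (B - A) ^ 2)
    -- `ns` is bounded by `κ` on the `nr`-unit ball
    (hκbound : ∀ Z : E, nr Z ≤ 1 → ns Z ≤ κ)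
    -- the GCG iterates
    (X : ℕ → E) (Z : ℕ → E)
    -- (i) the linearized subproblem
    (hZ_feas : ∀ k : ℕ, 1 ≤ k → nr (Z k) ≤ 1)
    (hZ_opt : ∀ k : ℕ, 1 ≤ k → ∀ W : E, nr W ≤ 1 →
      ⟪Z k, f' (X (k - 1))⟫ ≤ ⟪W, f' (X (k - 1))⟫)
    -- (ii) the new iterate improves on the line-search upper bound `h_k`, with η_k = 2/(k+1)
    (hstep : ∀ k : ℕ, 1 ≤ k → ∀ θ : ℝ, 0 ≤ θ →
      φ (X k) ≤ f ((1 - 2 / ((k : ℝ) + 1)) • X (k - 1) + θ • Z k)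
        + μ * (1 - 2 / ((k : ℝ) + 1)) * nr (X (k - 1)) + μ * θ)
    -- (iii) uniform boundedness of the iterates
    (hbound : ∀ k : ℕ, ns (X k) ≤ R)
    -- the competitor `Xc`
    (Xc : E) (k : ℕ) (hk : 1 ≤ k) :
    φ (X k) - φ Xc ≤
      2 * max (L * (κ * nr Xc + R) ^ 2) (φ (X 1) - φ Xc) / ((k : ℝ) + 1) := by
  have hgradineq : ∀ A B : E, ⟪B - A, f' A⟫ ≤ f B - f A :=
    gradient_convex_ineq f f' hconv hgrad
  have hnrXc : 0 ≤ nr Xc := hnr_nonneg Xc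
  set D : ℝ := (κ * nr Xc + R) ^ 2 with hD
  set C : ℝ := max (L * D) (φ (X 1) - φ Xc) with hC
  have hD0 : 0 ≤ D := by rw [hD]; positivity
  have hC0 : 0 ≤ C := le_trans (mul_nonneg hL.le hD0) (le_max_left _ _)
  -- key recursion for j ≥ 2
  have key : ∀ j : ℕ, 2 ≤ j → φ (X j) ≤ (1 - 2 / ((j : ℝ) + 1)) * φ (X (j - 1))
      + (2 / ((j : ℝ) + 1)) * φ Xc + L * (2 / ((j : ℝ) + 1)) ^ 2 / 2 * D := by
    intro j hj2
    have hj1 : (1 : ℕ) ≤ j := le_trans one_le_two hj2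
    have hjR : (2 : ℝ) ≤ (j : ℝ) := by exact_mod_cast hj2
    have hjpos : (0 : ℝ) < (j : ℝ) + 1 := by linarith
    set η : ℝ := 2 / ((j : ℝ) + 1) with hη
    have hη0 : 0 < η := by rw [hη]; exact div_pos two_pos hjpos
    have hη1 : η < 1 := by rw [hη, div_lt_one hjpos]; linarith
    set θ : ℝ := η * nr Xc with hθ
    have hθ0 : 0 ≤ θ := mul_nonneg hη0.le hnrXc
    set A : E := X (j - 1) with hA
    set B : E := nr Xc • Z j with hB
    have hstep' := hstep j hj1 θ hθ0
    rw [← hη, ← hA] at hstep'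
    have hθZ : θ • Z j = η • B := by rw [hθ, hB, smul_smul]
    rw [hθZ] at hstep'
    have hsm := hsmooth A B η hη0 hη1
    have hZfeas := hZ_feas j hj1
    -- inner product bound
    have hinner : ⟪B - A, f' A⟫ ≤ f Xc - f A := by
      have h1 : nr Xc * ⟪Z j, f' A⟫ ≤ ⟪Xc, f' A⟫ := by
        rcases eq_or_lt_of_le hnrXc with h | h
        · have hXc0 : Xc = 0 := hnr_def Xc h.symm
          rw [← h, hXc0]
          simp
        · have hW : nr ((nr Xc)⁻¹ • Xc) ≤ 1 := by
            rw [hnr_smul, abs_of_pos (inv_pos.mpr h), inv_mul_cancel₀ (ne_of_gt h)]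
          have hopt := hZ_opt j hj1 _ hW
          rw [← hA, real_inner_smul_left] at hopt
          calc nr Xc * ⟪Z j, f' A⟫ ≤ nr Xc * ((nr Xc)⁻¹ * ⟪Xc, f' A⟫) :=
                mul_le_mul_of_nonneg_left hopt hnrXc
            _ = ⟪Xc, f' A⟫ := by field_simp
      have h2 : ⟪Xc - A, f' A⟫ ≤ f Xc - f A := hgradineq A Xc
      have h3 : ⟪B - A, f' A⟫ = nr Xc * ⟪Z j, f' A⟫ - ⟪A, f' A⟫ := by
        rw [inner_sub_left, hB, real_inner_smul_left]
      have h4 : ⟪Xc - A, f' A⟫ = ⟪Xc, f' A⟫ - ⟪A, f' A⟫ := inner_sub_left _ _ _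
      linarith
    -- ns bound
    have hnsB : ns (B - A) ≤ κ * nr Xc + R := by
      have h1 : ns B ≤ κ * nr Xc := by
        rw [hB, hns_smul, abs_of_nonneg hnrXc, mul_comm κ (nr Xc)]
        exact mul_le_mul_of_nonneg_left (hκbound _ hZfeas) hnrXc
      have h2 : ns (-A) ≤ R := by
        have hnegA : (-A) = (-1 : ℝ) • A := by simp
        rw [hnegA, hns_smul, hA]
        simpa using hbound (j - 1)
      calc ns (B - A) = ns (B + (-A)) := by rw [sub_eq_add_neg]
        _ ≤ ns B + ns (-A) := hns_add _ _
        _ ≤ κ * nr Xc + R := by linarith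
    have hns2 : ns (B - A) ^ 2 ≤ D := by
      rw [hD]
      exact pow_le_pow_left₀ (hns_nonneg _) hnsB 2
    have e1 : η * ⟪B - A, f' A⟫ ≤ η * (f Xc - f A) :=
      mul_le_mul_of_nonneg_left hinner hη0.le
    have e2 : L * η ^ 2 / 2 * ns (B - A) ^ 2 ≤ L * η ^ 2 / 2 * D :=
      mul_le_mul_of_nonneg_left hns2
        (div_nonneg (mul_nonneg hL.le (sq_nonneg η)) two_pos.le)
    rw [hφ (X j)] at hstep' ⊢
    rw [hφ A, hφ Xc]
    have hθμ : μ * θ = μ * (η * nr Xc) := by rw [hθ]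
    linarith [hstep', hsm, e1, e2, hθμ]
  -- induction
  induction k, hk using Nat.le_induction with
  | base =>
    have h2 : 2 * C / (((1 : ℕ) : ℝ) + 1) = C := by push_cast; ring
    rw [h2, hC]
    exact le_max_right _ _
  | succ n hn ih =>
    have hkey := key (n + 1) (by omega)
    simp only [Nat.add_sub_cancel] at hkey
    push_cast at hkey ⊢
    rw [show ((n : ℝ) + 1 + 1) = (n : ℝ) + 2 from by ring] at hkey ⊢
    have hm1 : (0 : ℝ) < (n : ℝ) + 1 := by positivity
    have hm2 : (0 : ℝ) < (n : ℝ) + 2 := by positivity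
    set e : ℝ := 2 / ((n : ℝ) + 2) with he
    have he0 : 0 < e := by rw [he]; exact div_pos two_pos hm2
    have he1 : e ≤ 1 := by rw [he, div_le_one hm2]; linarith [(Nat.cast_nonneg n : (0:ℝ) ≤ (n:ℝ))]
    have s2 : (1 - e) * (φ (X n) - φ Xc) ≤ (1 - e) * (2 * C / ((n : ℝ) + 1)) :=
      mul_le_mul_of_nonneg_left ih (by linarith)
    have s3 : L * e ^ 2 / 2 * D ≤ e ^ 2 / 2 * C := by
      have hr : L * e ^ 2 / 2 * D = e ^ 2 / 2 * (L * D) := by ring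
      rw [hr]
      exact mul_le_mul_of_nonneg_left (le_max_left _ _) (by positivity)
    have heq : (1 - e) * (2 * C / ((n : ℝ) + 1)) + e ^ 2 / 2 * C
        = 2 * C / ((n : ℝ) + 2) - 2 * C / (((n : ℝ) + 1) * ((n : ℝ) + 2) ^ 2) := by
      rw [he]; field_simp; ring
    have hnn : 0 ≤ 2 * C / (((n : ℝ) + 1) * ((n : ℝ) + 2) ^ 2) :=
      div_nonneg (by linarith) (by positivity)
    linarith [hkey, s2, s3, heq, hnn]
end

section
/- Under the stated assumptions, for every ε > 0 and every X ∈ E, if k ≥ 2C/ε then φ(X_k) − φ(X) ≤ ε; that is, GCG outputs an ε-approximate solution (in function value) in at most O(1/ε) steps. -/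
open RealInnerProductSpace

lemma convex_first_order {E : Type*} [NormedAddCommGroup E] [InnerProductSpace ℝ E]
    [FiniteDimensional ℝ E]
    (f : E → ℝ) (g A B : E) (hconv : ConvexOn ℝ Set.univ f)
    (hg : HasGradientAt f g A) :
    ⟪B - A, g⟫ ≤ f B - f A := by
  set v := B - A with hv
  have hline : HasDerivAt (fun t : ℝ => f (A + t • v)) ⟪g, v⟫ 0 := by
    have h1 : HasDerivAt (fun t : ℝ => A + t • v) v 0 := by
      simpa using ((hasDerivAt_id (0:ℝ)).smul_const v).const_add A
    have h2 : HasFDerivAt f (InnerProductSpace.toDual ℝ E g) (A + (0:ℝ) • v) := by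
      simpa using hg.hasFDerivAt
    convert h2.comp_hasDerivAt 0 h1 using 1 <;> first | rfl | simp
  rw [hasDerivAt_iff_tendsto_slope] at hline
  have htend : Filter.Tendsto (slope (fun t : ℝ => f (A + t • v)) 0) (nhdsWithin 0 (Set.Ioi 0))
      (nhds ⟪g, v⟫) := hline.mono_left (nhdsWithin_mono 0 (fun t ht => ht.ne'))
  have hb : ∀ᶠ t in nhdsWithin (0:ℝ) (Set.Ioi 0),
      slope (fun t : ℝ => f (A + t • v)) 0 t ≤ f B - f A := by
    filter_upwards [Ioo_mem_nhdsGT_of_mem (by norm_num : (0:ℝ) ∈ Set.Ico 0 1)] with t ht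
    have ht0 : 0 < t := ht.1
    have ht1 : t < 1 := ht.2
    have hrepr : A + t • v = (1 - t) • A + t • B := by rw [hv]; module
    have hcv := hconv.2 (Set.mem_univ A) (Set.mem_univ B)
      (by linarith : (0:ℝ) ≤ 1 - t) ht0.le (by ring)
    rw [slope_def_field, sub_zero, div_le_iff₀ ht0]
    simp only [zero_smul, add_zero, hrepr, smul_eq_mul] at hcv ⊢
    nlinarith [hcv]
  have := le_of_tendsto htend hb
  rwa [real_inner_comm] at this


set_option maxHeartbeats 1600000 in
/-- **GCG gives an ε-approximate solution in O(1/ε) steps**: under the assumptions of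
Theorem 1, with `C = max (L * (κ * nr Xc + R)^2) (φ (X 1) - φ Xc)`, for every `ε > 0`,
if `k ≥ 2 C / ε` then `φ (X k) - φ Xc ≤ ε`. -/
theorem gcg_eps_approximate
    {E : Type*} [NormedAddCommGroup E] [InnerProductSpace ℝ E] [FiniteDimensional ℝ E]
    (f : E → ℝ) (f' : E → E)
    (hconv : ConvexOn ℝ Set.univ f)
    (hgrad : ∀ A : E, HasGradientAt f (f' A) A)
    -- `nr` is a norm on `E` (playing the role of the nuclear norm)
    (nr : E → ℝ)
    (hnr_nonneg : ∀ x, 0 ≤ nr x)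
    (hnr_def : ∀ x, nr x = 0 → x = 0)
    (hnr_add : ∀ x y, nr (x + y) ≤ nr x + nr y)
    (hnr_smul : ∀ (c : ℝ) (x : E), nr (c • x) = |c| * nr x)
    -- `ns` is a norm on `E` (with respect to which `f` is smooth)
    (ns : E → ℝ)
    (hns_nonneg : ∀ x, 0 ≤ ns x)
    (hns_def : ∀ x, ns x = 0 → x = 0)
    (hns_add : ∀ x y, ns (x + y) ≤ ns x + ns y)
    (hns_smul : ∀ (c : ℝ) (x : E), ns (c • x) = |c| * ns x)
    (μ L κ R : ℝ) (hμ : 0 < μ) (hL : 0 < L) (hκ : 0 < κ)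
    -- the objective function φ
    (φ : E → ℝ) (hφ : ∀ Y, φ Y = f Y + μ * nr Y)
    -- the smoothness assumption (Assumption 1)
    (hsmooth : ∀ A B : E, ∀ η : ℝ, 0 < η → η < 1 →
      f ((1 - η) • A + η • B) ≤ f A + η * ⟪B - A, f' A⟫ + L * η ^ 2 / 2 * ns (B - A) ^ 2)
    -- `ns` is bounded by `κ` on the `nr`-unit ball
    (hκbound : ∀ Z : E, nr Z ≤ 1 → ns Z ≤ κ)
    -- the GCG iterates
    (X : ℕ → E) (Z : ℕ → E)
    -- (i) the linearized subproblem
    (hZ_feas : ∀ k : ℕ, 1 ≤ k → nr (Z k) ≤ 1)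
    (hZ_opt : ∀ k : ℕ, 1 ≤ k → ∀ W : E, nr W ≤ 1 →
      ⟪Z k, f' (X (k - 1))⟫ ≤ ⟪W, f' (X (k - 1))⟫)
    -- (ii) the new iterate improves on the line-search upper bound `h_k`, with η_k = 2/(k+1)
    (hstep : ∀ k : ℕ, 1 ≤ k → ∀ θ : ℝ, 0 ≤ θ →
      φ (X k) ≤ f ((1 - 2 / ((k : ℝ) + 1)) • X (k - 1) + θ • Z k)
        + μ * (1 - 2 / ((k : ℝ) + 1)) * nr (X (k - 1)) + μ * θ)
    -- (iii) uniform boundedness of the iterates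
    (hbound : ∀ k : ℕ, ns (X k) ≤ R)
    -- the competitor `Xc`, the constant `C`, and the accuracy `ε`
    (Xc : E) (C : ℝ)
    (hC : C = max (L * (κ * nr Xc + R) ^ 2) (φ (X 1) - φ Xc))
    (ε : ℝ) (hε : 0 < ε)
    (k : ℕ) (hk : 1 ≤ k) (hkε : 2 * C / ε ≤ (k : ℝ)) :
    φ (X k) - φ Xc ≤ ε := by
  obtain ⟨C', hC'⟩ : ∃ c : ℝ, c = L * (κ * nr Xc + R) ^ 2 := ⟨_, rfl⟩
  have hR0 : 0 ≤ R := le_trans (hns_nonneg (X 0)) (hbound 0)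
  have hnrXc : 0 ≤ nr Xc := hnr_nonneg Xc
  have hcore : 0 ≤ κ * nr Xc + R := by positivity
  have hC'0 : 0 ≤ C' := by rw [hC']; positivity
  have hC'C : C' ≤ C := by rw [hC, hC']; exact le_max_left _ _
  have hC0 : 0 ≤ C := hC'0.trans hC'C
  have hfo : ∀ A B : E, ⟪B - A, f' A⟫ ≤ f B - f A :=
    fun A B => convex_first_order f (f' A) A B hconv (hgrad A)
  -- the one-step recursion
  have key : ∀ n : ℕ, 1 ≤ n → φ (X (n+1)) - φ Xc ≤
      (1 - 2/((n:ℝ)+1+1)) * (φ (X n) - φ Xc) + (2/((n:ℝ)+1+1))^2 * C' / 2 := by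
    intro n hn
    have hn1 : (1:ℝ) ≤ (n:ℝ) := by exact_mod_cast hn
    set η : ℝ := 2/((n:ℝ)+1+1) with hη
    have hη0 : 0 < η := by positivity
    have hη1 : η < 1 := by
      rw [hη, div_lt_one (by linarith)]; linarith
    set A : E := X n with hA
    set B : E := nr Xc • Z (n+1) with hB
    have hθ0 : 0 ≤ η * nr Xc := by positivity
    have h1 := hstep (n+1) (by omega) (η * nr Xc) hθ0
    simp only [Nat.add_sub_cancel] at h1
    push_cast at h1
    rw [← hη] at h1
    have hθZ : (η * nr Xc) • Z (n+1) = η • B := by rw [hB, smul_smul]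
    rw [hθZ] at h1
    have h2 := hsmooth A B η hη0 hη1
    -- inner product bound
    have hZopt := hZ_opt (n+1) (by omega)
    simp only [Nat.add_sub_cancel] at hZopt
    have hXcB : ⟪B, f' A⟫ ≤ ⟪Xc, f' A⟫ := by
      rcases eq_or_lt_of_le hnrXc with h0 | hpos
      · have hXc0 : Xc = 0 := hnr_def Xc h0.symm
        have hB0 : B = Xc := by rw [hB, ← h0, hXc0, zero_smul]
        rw [hB0]
      · have hW : nr ((nr Xc)⁻¹ • Xc) ≤ 1 := by
          rw [hnr_smul, abs_of_pos (inv_pos.mpr hpos), inv_mul_cancel₀ hpos.ne']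
        have hZW := hZopt ((nr Xc)⁻¹ • Xc) hW
        have hmul := mul_le_mul_of_nonneg_left hZW hnrXc
        have e1 : ⟪B, f' A⟫ = nr Xc * ⟪Z (n+1), f' A⟫ := real_inner_smul_left _ _ _
        have e2 : nr Xc * ⟪(nr Xc)⁻¹ • Xc, f' A⟫ = ⟪Xc, f' A⟫ := by
          rw [← real_inner_smul_left, smul_smul, mul_inv_cancel₀ hpos.ne', one_smul]
        rw [e1, ← e2]; exact hmul
    have hinner : ⟪B - A, f' A⟫ ≤ f Xc - f A := by
      have hfoA := hfo A Xc
      have e3 : ⟪B - A, f' A⟫ = ⟪B, f' A⟫ - ⟪A, f' A⟫ := inner_sub_left _ _ _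
      have e4 : ⟪Xc - A, f' A⟫ = ⟪Xc, f' A⟫ - ⟪A, f' A⟫ := inner_sub_left _ _ _
      rw [e3]; rw [e4] at hfoA; linarith
    -- norm bound
    have hnsBA : ns (B - A) ≤ κ * nr Xc + R := by
      have t1 : ns (B - A) ≤ ns B + ns (-A) := by
        rw [sub_eq_add_neg]; exact hns_add B (-A)
      have t2 : ns (-A) = ns A := by
        rw [show (-A : E) = (-1 : ℝ) • A by simp, hns_smul]; simp
      have t3 : ns B = nr Xc * ns (Z (n+1)) := by
        rw [hB, hns_smul, abs_of_nonneg hnrXc]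
      have t4 : ns (Z (n+1)) ≤ κ := hκbound _ (hZ_feas (n+1) (by omega))
      have t5 : ns A ≤ R := hbound n
      have t6 : nr Xc * ns (Z (n+1)) ≤ nr Xc * κ := mul_le_mul_of_nonneg_left t4 hnrXc
      nlinarith [t1, t2, t3, t5, t6]
    have hnsBA2 : ns (B - A) ^ 2 ≤ (κ * nr Xc + R) ^ 2 :=
      pow_le_pow_left₀ (hns_nonneg _) hnsBA 2
    -- combine
    have hfinal : φ (X (n+1)) ≤ (1-η)*φ (X n) + η*φ Xc + η^2 * C' / 2 := by
      rw [hφ (X n), hφ Xc]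
      have p1 : η * ⟪B - A, f' A⟫ ≤ η * (f Xc - f A) :=
        mul_le_mul_of_nonneg_left hinner hη0.le
      have p2 : L * η^2 / 2 * ns (B - A)^2 ≤ L * η^2 / 2 * (κ * nr Xc + R)^2 :=
        mul_le_mul_of_nonneg_left hnsBA2 (by positivity)
      have p3 : L * η^2 / 2 * (κ * nr Xc + R)^2 = η^2 * C' / 2 := by rw [hC']; ring
      have expand : (1-η)*(f (X n) + μ*nr (X n)) + η*(f Xc + μ*nr Xc) + η^2*C'/2
          = f A + η*(f Xc - f A) + L * η^2 / 2 * (κ * nr Xc + R)^2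
            + μ*(1-η)*nr (X n) + μ*(η*nr Xc) := by rw [hA, hC']; ring
      linarith [h1, h2, p1, p2, expand]
    have hring : (1-η)*(φ (X n) - φ Xc) = (1-η)*φ (X n) + η*φ Xc - φ Xc := by ring
    linarith [hfinal, hring]
  -- the rate, by induction
  have rate : ∀ m : ℕ, 1 ≤ m → φ (X m) - φ Xc ≤ 2 * C / ((m:ℝ) + 1) := by
    intro m hm
    induction m, hm using Nat.le_induction with
    | base =>
      have : φ (X 1) - φ Xc ≤ C := by rw [hC]; exact le_max_right _ _
      norm_num; linarith
    | succ n hn ih =>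
      have hk := key n hn
      have hn1 : (1:ℝ) ≤ (n:ℝ) := by exact_mod_cast hn
      have hd2 : (0:ℝ) < (n:ℝ)+1+1 := by linarith
      have hη1 : 2/((n:ℝ)+1+1) < 1 := by rw [div_lt_one hd2]; linarith
      have q1 : (1 - 2/((n:ℝ)+1+1)) * (φ (X n) - φ Xc)
          ≤ (1 - 2/((n:ℝ)+1+1)) * (2*C/((n:ℝ)+1)) :=
        mul_le_mul_of_nonneg_left ih (by linarith)
      have q2 : (2/((n:ℝ)+1+1))^2 * C' / 2 ≤ (2/((n:ℝ)+1+1))^2 * C / 2 := by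
        have h := mul_le_mul_of_nonneg_left hC'C (sq_nonneg (2/((n:ℝ)+1+1)))
        linarith
      have hident : (1 - 2/((n:ℝ)+1+1)) * (2*C/((n:ℝ)+1)) + (2/((n:ℝ)+1+1))^2 * C / 2
          = 2*C/((n:ℝ)+1+1) - 2*C/(((n:ℝ)+1)*((n:ℝ)+1+1)^2) := by
        field_simp
        ring
      have hpos : 0 ≤ 2*C/(((n:ℝ)+1)*((n:ℝ)+1+1)^2) := by positivity
      have hfin : φ (X (n+1)) - φ Xc ≤ 2*C/((n:ℝ)+1+1) := by
        linarith [hk, q1, q2, hident, hpos]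
      push_cast
      linarith [hfin]
  -- conclude
  have hrate := rate k hk
  have hk0 : (0:ℝ) < (k:ℝ) + 1 := by positivity
  have h2C : 2 * C ≤ ε * (k:ℝ) := by
    rw [div_le_iff₀ hε] at hkε; linarith
  have : 2 * C / ((k:ℝ) + 1) ≤ ε := by
    rw [div_le_iff₀ hk0]; nlinarith
  linarith
end

section
/- One-step descent inequality: fix X ∈ E, k ≥ 1 and η ∈ (0,1). Suppose Z satisfies ‖Z‖_r ≤ 1 and ⟨Z, ∇f(W)⟩ ≤ ⟨Z', ∇f(W)⟩ for all Z' with ‖Z'‖_r ≤ 1, where W = X_{k−1}, and suppose the next iterate X_k satisfies φ(X_k) ≤ f((1−η)W + θZ) + μ(1−η)‖W‖_r + μθ for every θ ≥ 0. Then φ(X_k) ≤ (1−η)φ(W) + η φ(X) + (C_k η²)/2, where C_k = L·‖ ‖X‖_r · Z − W ‖_s². -/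
open RealInnerProductSpace


lemma gcg_first_order {E : Type*} [NormedAddCommGroup E] [InnerProductSpace ℝ E]
    [FiniteDimensional ℝ E] (f : E → ℝ) (f' : E → E)
    (hconv : ConvexOn ℝ Set.univ f) (W X : E) (hgrad : HasGradientAt f (f' W) W) :
    ⟪X - W, f' W⟫ ≤ f X - f W := by
  set g : ℝ → ℝ := fun t => f (W + t • (X - W)) with hg
  have hgc : ConvexOn ℝ Set.univ g := by
    have h := hconv.comp_affineMap (AffineMap.lineMap W X : ℝ →ᵃ[ℝ] E)
    have heq : f ∘ (AffineMap.lineMap W X : ℝ →ᵃ[ℝ] E) = g := by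
      funext t; simp [g, AffineMap.lineMap_apply, add_comm]
    simpa [heq] using h
  have hline : HasDerivAt (fun t : ℝ => W + t • (X - W)) (X - W) 0 := by
    simpa using ((hasDerivAt_id (0:ℝ)).smul_const (X - W)).const_add W
  have hgd : HasDerivAt g ⟪X - W, f' W⟫ 0 := by
    have hF : HasFDerivAt f (InnerProductSpace.toDual ℝ E (f' W)) (W + (0:ℝ) • (X - W)) := by
      simpa using hgrad.hasFDerivAt
    have := hF.comp_hasDerivAt 0 hline
    rw [InnerProductSpace.toDual_apply_apply, real_inner_comm (X - W) (f' W)] at this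
    exact this
  have := hgc.le_slope_of_hasDerivAt (Set.mem_univ (0:ℝ)) (Set.mem_univ (1:ℝ)) one_pos hgd
  simpa [slope_def_field, g] using this

/-- **One-step descent inequality** for GCG: if `Z` solves the linearized subproblem at
`W = X_{k-1}` and the next iterate `Xk` improves on the line-search upper bound, then
`φ Xk ≤ (1 - η) * φ W + η * φ Xc + Ck * η^2 / 2`, where
`Ck = L * (ns (nr Xc • Z - W))^2`. -/
theorem gcg_one_step_descent
    {E : Type*} [NormedAddCommGroup E] [InnerProductSpace ℝ E] [FiniteDimensional ℝ E]
    (f : E → ℝ) (f' : E → E)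
    (hconv : ConvexOn ℝ Set.univ f)
    (hgrad : ∀ A : E, HasGradientAt f (f' A) A)
    -- `nr` is a norm on `E` (playing the role of the nuclear norm)
    (nr : E → ℝ)
    (hnr_nonneg : ∀ x, 0 ≤ nr x)
    (hnr_def : ∀ x, nr x = 0 → x = 0)
    (hnr_add : ∀ x y, nr (x + y) ≤ nr x + nr y)
    (hnr_smul : ∀ (c : ℝ) (x : E), nr (c • x) = |c| * nr x)
    -- `ns` is a norm on `E` (with respect to which `f` is smooth)
    (ns : E → ℝ)
    (hns_nonneg : ∀ x, 0 ≤ ns x)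
    (hns_def : ∀ x, ns x = 0 → x = 0)
    (hns_add : ∀ x y, ns (x + y) ≤ ns x + ns y)
    (hns_smul : ∀ (c : ℝ) (x : E), ns (c • x) = |c| * ns x)
    (μ L : ℝ) (hμ : 0 < μ) (hL : 0 < L)
    -- the objective function φ
    (φ : E → ℝ) (hφ : ∀ Y, φ Y = f Y + μ * nr Y)
    -- the smoothness assumption (Assumption 1)
    (hsmooth : ∀ A B : E, ∀ η : ℝ, 0 < η → η < 1 →
      f ((1 - η) • A + η • B) ≤ f A + η * ⟪B - A, f' A⟫ + L * η ^ 2 / 2 * ns (B - A) ^ 2)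
    -- the competitor `Xc`, the current iterate `W = X_{k-1}`, the step size `η`
    (Xc W Xk Z : E) (η : ℝ) (hη0 : 0 < η) (hη1 : η < 1)
    -- `Z` solves the linearized subproblem at `W`
    (hZ_feas : nr Z ≤ 1)
    (hZ_opt : ∀ Z' : E, nr Z' ≤ 1 → ⟪Z, f' W⟫ ≤ ⟪Z', f' W⟫)
    -- the next iterate `Xk` improves on the line-search upper bound
    (hstep : ∀ θ : ℝ, 0 ≤ θ →
      φ Xk ≤ f ((1 - η) • W + θ • Z) + μ * (1 - η) * nr W + μ * θ) :
    φ Xk ≤ (1 - η) * φ W + η * φ Xc + L * ns (nr Xc • Z - W) ^ 2 * η ^ 2 / 2 := by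
  set B : E := nr Xc • Z with hB
  have hθ : 0 ≤ η * nr Xc := mul_nonneg hη0.le (hnr_nonneg Xc)
  have h1 : φ Xk ≤ f ((1 - η) • W + η • B) + μ * (1 - η) * nr W + μ * (η * nr Xc) := by
    have := hstep (η * nr Xc) hθ
    simpa [hB, smul_smul] using this
  have h2 := hsmooth W B η hη0 hη1
  have h3 : ⟪B, f' W⟫ ≤ ⟪Xc, f' W⟫ := by
    rcases eq_or_lt_of_le (hnr_nonneg Xc) with h0 | hpos
    · have hXc0 : Xc = 0 := hnr_def Xc h0.symm
      have hz : nr Xc = 0 := h0.symm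
      rw [hB, hz, hXc0]; simp
    · have hfeas : nr ((nr Xc)⁻¹ • Xc) ≤ 1 := by
        rw [hnr_smul, abs_of_pos (inv_pos.mpr hpos), inv_mul_cancel₀ hpos.ne']
      have := hZ_opt ((nr Xc)⁻¹ • Xc) hfeas
      rw [real_inner_smul_left] at this
      have h' := mul_le_mul_of_nonneg_left this hpos.le
      rw [hB, real_inner_smul_left]
      calc nr Xc * ⟪Z, f' W⟫ ≤ nr Xc * ((nr Xc)⁻¹ * ⟪Xc, f' W⟫) := h'
        _ = ⟪Xc, f' W⟫ := by field_simp
  have h4 : ⟪Xc - W, f' W⟫ ≤ f Xc - f W :=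
    gcg_first_order f f' hconv W Xc (hgrad W)
  have h5 : ⟪B - W, f' W⟫ ≤ f Xc - f W := by
    rw [inner_sub_left] at h4 ⊢; linarith
  have h6 : η * ⟪B - W, f' W⟫ ≤ η * (f Xc - f W) :=
    mul_le_mul_of_nonneg_left h5 hη0.le
  rw [hφ Xk] at h1 ⊢
  rw [hφ W, hφ Xc]
  have : f Xk + μ * nr Xk ≤ f W + η * (f Xc - f W) + L * η ^ 2 / 2 * ns (B - W) ^ 2
      + μ * (1 - η) * nr W + μ * (η * nr Xc) := by linarith
  calc f Xk + μ * nr Xk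
      ≤ f W + η * (f Xc - f W) + L * η ^ 2 / 2 * ns (B - W) ^ 2
        + μ * (1 - η) * nr W + μ * (η * nr Xc) := this
    _ = (1 - η) * (f W + μ * nr W) + η * (f Xc + μ * nr Xc)
        + L * ns (B - W) ^ 2 * η ^ 2 / 2 := by ring
end
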